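/- Let 0 ≤ ρ < 1 and let a_0,...,a_{T−1} be nonnegative real numbers. Then ∑_{t=1}^{T−1} ∑_{τ=0}^{t−1} ∑_{τ'=0}^{t−1} ρ^{(2t−2−τ−τ')/2} (a_τ + a_{τ'})/2 ≤ (1/(1−√ρ)²) ∑_{τ=0}^{T−1} a_τ. -/

import Mathlib

/-- double geometric-sum bound with decay rate `√ρ`. -/
theorem stmt16 (ρ : ℝ) (hρ0 : 0 ≤ ρ) (hρ1 : ρ < 1) (T : ℕ)
    (a : ℕ → ℝ) (ha : ∀ t, 0 ≤ a t) :
    ∑ t ∈ Finset.Ico 1 T, ∑ τ ∈ Finset.range t, ∑ τ' ∈ Finset.range t,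
        Real.sqrt ρ ^ (2 * t - 2 - τ - τ') * ((a τ + a τ') / 2) ≤
      (1 / (1 - Real.sqrt ρ) ^ 2) * ∑ τ ∈ Finset.range T, a τ := by
  set s := Real.sqrt ρ with hs
  have hs0 : 0 ≤ s := Real.sqrt_nonneg ρ
  have hs1 : s < 1 := by
    rw [hs, show (1 : ℝ) = Real.sqrt 1 by simp]
    exact Real.sqrt_lt_sqrt hρ0 hρ1
  have h1s : 0 < 1 - s := by linarith
  -- geometric sum bound
  have geo : ∀ n : ℕ, ∑ k ∈ Finset.range n, s ^ k ≤ 1 / (1 - s) := by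
    intro n
    have heq : ∑ k ∈ Finset.range n, s ^ k = (1 - s ^ n) / (1 - s) := by
      rw [geom_sum_eq (ne_of_lt hs1) n]
      rw [div_eq_div_iff (sub_ne_zero.mpr (ne_of_lt hs1)) h1s.ne']
      ring
    rw [heq]
    have hpow : 0 ≤ s ^ n := pow_nonneg hs0 n
    rw [div_le_div_iff₀ h1s h1s]
    nlinarith
  -- step 1: rewrite the exponent
  have step1 : ∀ t ∈ Finset.Ico 1 T,
      ∑ τ ∈ Finset.range t, ∑ τ' ∈ Finset.range t,
        s ^ (2 * t - 2 - τ - τ') * ((a τ + a τ') / 2)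
      = ∑ τ ∈ Finset.range t, ∑ τ' ∈ Finset.range t,
        s ^ (t - 1 - τ) * s ^ (t - 1 - τ') * ((a τ + a τ') / 2) := by
    intro t ht
    simp only [Finset.mem_Ico] at ht
    refine Finset.sum_congr rfl fun τ hτ => Finset.sum_congr rfl fun τ' hτ' => ?_
    simp only [Finset.mem_range] at hτ hτ'
    have he : 2 * t - 2 - τ - τ' = (t - 1 - τ) + (t - 1 - τ') := by omega
    rw [he, pow_add]
  -- step 2: symmetrize
  have step2 : ∀ t : ℕ,
      ∑ τ ∈ Finset.range t, ∑ τ' ∈ Finset.range t,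
        s ^ (t - 1 - τ) * s ^ (t - 1 - τ') * ((a τ + a τ') / 2)
      = ∑ τ ∈ Finset.range t, ∑ τ' ∈ Finset.range t,
        s ^ (t - 1 - τ) * s ^ (t - 1 - τ') * a τ := by
    intro t
    have h : ∀ τ τ' : ℕ, s ^ (t - 1 - τ) * s ^ (t - 1 - τ') * ((a τ + a τ') / 2)
        = (s ^ (t - 1 - τ) * s ^ (t - 1 - τ') * a τ
          + s ^ (t - 1 - τ) * s ^ (t - 1 - τ') * a τ') / 2 := fun τ τ' => by ring
    simp only [h, ← Finset.sum_div, Finset.sum_add_distrib]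
    have hswap : ∑ τ ∈ Finset.range t, ∑ τ' ∈ Finset.range t,
        s ^ (t - 1 - τ) * s ^ (t - 1 - τ') * a τ'
        = ∑ τ ∈ Finset.range t, ∑ τ' ∈ Finset.range t,
        s ^ (t - 1 - τ) * s ^ (t - 1 - τ') * a τ := by
      rw [Finset.sum_comm]
      refine Finset.sum_congr rfl fun τ _ => Finset.sum_congr rfl fun τ' _ => by ring
    rw [hswap]
    ring
  -- step 3: bound inner sum over τ'
  have step3 : ∀ t : ℕ,
      ∑ τ ∈ Finset.range t, ∑ τ' ∈ Finset.range t,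
        s ^ (t - 1 - τ) * s ^ (t - 1 - τ') * a τ
      ≤ (1 / (1 - s)) * ∑ τ ∈ Finset.range t, s ^ (t - 1 - τ) * a τ := by
    intro t
    rw [Finset.mul_sum]
    refine Finset.sum_le_sum fun τ _ => ?_
    have hrw : ∑ τ' ∈ Finset.range t, s ^ (t - 1 - τ) * s ^ (t - 1 - τ') * a τ
        = (s ^ (t - 1 - τ) * a τ) * ∑ τ' ∈ Finset.range t, s ^ (t - 1 - τ') := by
      rw [Finset.mul_sum]
      exact Finset.sum_congr rfl fun τ' _ => by ring
    rw [hrw]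
    have hrefl : ∑ τ' ∈ Finset.range t, s ^ (t - 1 - τ') = ∑ k ∈ Finset.range t, s ^ k :=
      Finset.sum_range_reflect (fun k => s ^ k) t
    rw [hrefl]
    have hnn : 0 ≤ s ^ (t - 1 - τ) * a τ := mul_nonneg (pow_nonneg hs0 _) (ha τ)
    calc (s ^ (t - 1 - τ) * a τ) * ∑ k ∈ Finset.range t, s ^ k
        ≤ (s ^ (t - 1 - τ) * a τ) * (1 / (1 - s)) :=
          mul_le_mul_of_nonneg_left (geo t) hnn
      _ = 1 / (1 - s) * (s ^ (t - 1 - τ) * a τ) := by ring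
  -- combine
  have hmain : ∑ t ∈ Finset.Ico 1 T, ∑ τ ∈ Finset.range t, ∑ τ' ∈ Finset.range t,
        s ^ (2 * t - 2 - τ - τ') * ((a τ + a τ') / 2)
      ≤ (1 / (1 - s)) * ∑ t ∈ Finset.Ico 1 T, ∑ τ ∈ Finset.range t, s ^ (t - 1 - τ) * a τ := by
    rw [Finset.mul_sum]
    refine Finset.sum_le_sum fun t ht => ?_
    rw [step1 t ht, step2 t]
    exact step3 t
  refine le_trans hmain ?_
  -- swap order of summation
  have hswap2 : ∑ t ∈ Finset.Ico 1 T, ∑ τ ∈ Finset.range t, s ^ (t - 1 - τ) * a τ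
      = ∑ τ ∈ Finset.Ico 0 T, ∑ t ∈ Finset.Ico (τ + 1) T, s ^ (t - 1 - τ) * a τ := by
    have e1 : ∑ t ∈ Finset.Ico 1 T, ∑ τ ∈ Finset.range t, s ^ (t - 1 - τ) * a τ
        = ∑ t ∈ Finset.Ico 0 T, ∑ τ ∈ Finset.Ico 0 t, s ^ (t - 1 - τ) * a τ := by
      simp only [← Finset.range_eq_Ico]
      rcases Nat.eq_zero_or_pos T with h0 | h0
      · subst h0; simp
      · have hins : Finset.range T = insert 0 (Finset.Ico 1 T) := by
          ext x
          simp only [Finset.mem_range, Finset.mem_insert, Finset.mem_Ico]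
          omega
        rw [hins, Finset.sum_insert (by simp)]
        simp
    rw [e1]
    exact (Finset.sum_Ico_Ico_comm' 0 T fun τ t => s ^ (t - 1 - τ) * a τ).symm
  rw [hswap2]
  -- bound the t-sum for each τ
  have hτbound : ∀ τ : ℕ, ∑ t ∈ Finset.Ico (τ + 1) T, s ^ (t - 1 - τ) * a τ
      ≤ (1 / (1 - s)) * a τ := by
    intro τ
    rw [Finset.sum_Ico_eq_sum_range]
    have hrw : ∀ k ∈ Finset.range (T - (τ + 1)), s ^ (τ + 1 + k - 1 - τ) * a τ = s ^ k * a τ := by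
      intro k _
      congr 2
      omega
    rw [Finset.sum_congr rfl hrw, ← Finset.sum_mul]
    exact mul_le_mul_of_nonneg_right (geo _) (ha τ)
  calc (1 / (1 - s)) * ∑ τ ∈ Finset.Ico 0 T, ∑ t ∈ Finset.Ico (τ + 1) T, s ^ (t - 1 - τ) * a τ
      ≤ (1 / (1 - s)) * ∑ τ ∈ Finset.Ico 0 T, (1 / (1 - s)) * a τ := by
        refine mul_le_mul_of_nonneg_left (Finset.sum_le_sum fun τ _ => hτbound τ) ?_
        positivity
    _ = (1 / (1 - s) ^ 2) * ∑ τ ∈ Finset.range T, a τ := by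
        rw [show Finset.Ico 0 T = Finset.range T from (Finset.range_eq_Ico T).symm]
        rw [Finset.mul_sum, Finset.mul_sum]
        refine Finset.sum_congr rfl fun τ _ => ?_
        rw [show (1 : ℝ) / (1 - s) ^ 2 = 1 / (1 - s) * (1 / (1 - s)) by
          rw [div_mul_div_comm, one_mul, sq]]
        ring
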